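/- Let ρ_d, ρ_s, Δ_s, Δ_d, σ_{us}², σ_{ud}², σ_{ds}², σ_{sd}² > 0 and for γ > 0 define F(γ) = 1 - [2 ρ_d γ σ_{ds}² exp(-Δ_d/(2 ρ_d γ σ_{ds}²)) / (2 ρ_d γ σ_{ds}² + Δ_d γ σ_{us}²)] · [2 ρ_s γ σ_{sd}² exp(-Δ_s/(2 ρ_s γ σ_{sd}²)) / (2 ρ_s γ σ_{sd}² + Δ_s γ σ_{ud}²)]. Then lim_{γ→∞} F(γ) = (2ρ_d σ_{ds}² Δ_s σ_{ud}² + 2ρ_s σ_{sd}² Δ_d σ_{us}² + Δ_d σ_{us}² Δ_s σ_{ud}²) / ((2ρ_d σ_{ds}² + Δ_d σ_{us}²)(2ρ_s σ_{sd}² + Δ_s σ_{ud}²)). -/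

import Mathlib

open Real Filter

/-- Asymptotic direct-link outage floor (Section V): with secondary SNRs proportional to
the primary SNR `γ`, the conditional outage probability `P(out | D = ∅)` of equation (11)
tends to a constant floor as `γ → ∞`. -/
theorem stmt_14 (ρd ρs Δs Δd σus σud σds σsd : ℝ)
    (hρd : 0 < ρd) (hρs : 0 < ρs) (hΔs : 0 < Δs) (hΔd : 0 < Δd)
    (hσus : 0 < σus) (hσud : 0 < σud) (hσds : 0 < σds) (hσsd : 0 < σsd) :
    Filter.Tendsto
      (fun γ : ℝ => 1 -
        (2 * ρd * γ * σds * Real.exp (-Δd / (2 * ρd * γ * σds)) /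
            (2 * ρd * γ * σds + Δd * γ * σus)) *
        (2 * ρs * γ * σsd * Real.exp (-Δs / (2 * ρs * γ * σsd)) /
            (2 * ρs * γ * σsd + Δs * γ * σud)))
      Filter.atTop
      (nhds ((2 * ρd * σds * Δs * σud + 2 * ρs * σsd * Δd * σus + Δd * σus * Δs * σud) /
        ((2 * ρd * σds + Δd * σus) * (2 * ρs * σsd + Δs * σud)))) := by
  have hA : (0:ℝ) < 2 * ρd * σds + Δd * σus := by positivity
  have hB : (0:ℝ) < 2 * ρs * σsd + Δs * σud := by positivity
  set g : ℝ → ℝ := fun γ => 1 -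
      (2 * ρd * σds * Real.exp ((-Δd / (2 * ρd * σds)) / γ) / (2 * ρd * σds + Δd * σus)) *
      (2 * ρs * σsd * Real.exp ((-Δs / (2 * ρs * σsd)) / γ) / (2 * ρs * σsd + Δs * σud))
    with hg
  have heq : ∀ᶠ γ : ℝ in atTop, (1 -
        (2 * ρd * γ * σds * Real.exp (-Δd / (2 * ρd * γ * σds)) /
            (2 * ρd * γ * σds + Δd * γ * σus)) *
        (2 * ρs * γ * σsd * Real.exp (-Δs / (2 * ρs * γ * σsd)) /
            (2 * ρs * γ * σsd + Δs * γ * σud))) = g γ := by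
    filter_upwards [eventually_gt_atTop (0:ℝ)] with γ hγ
    have hγ' : γ ≠ 0 := ne_of_gt hγ
    have e1 : -Δd / (2 * ρd * γ * σds) = (-Δd / (2 * ρd * σds)) / γ := by
      rw [div_div]; ring_nf
    have e2 : -Δs / (2 * ρs * γ * σsd) = (-Δs / (2 * ρs * σsd)) / γ := by
      rw [div_div]; ring_nf
    have e3 : 2 * ρd * γ * σds + Δd * γ * σus = γ * (2 * ρd * σds + Δd * σus) := by ring
    have e4 : 2 * ρs * γ * σsd + Δs * γ * σud = γ * (2 * ρs * σsd + Δs * σud) := by ring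
    rw [hg]
    simp only [e1, e2, e3, e4]
    field_simp
  rw [tendsto_congr' heq]
  have hlim1 : Tendsto (fun γ : ℝ => (-Δd / (2 * ρd * σds)) / γ) atTop (nhds 0) :=
    tendsto_const_nhds.div_atTop tendsto_id
  have hlim2 : Tendsto (fun γ : ℝ => (-Δs / (2 * ρs * σsd)) / γ) atTop (nhds 0) :=
    tendsto_const_nhds.div_atTop tendsto_id
  have hexp1 : Tendsto (fun γ : ℝ => Real.exp ((-Δd / (2 * ρd * σds)) / γ)) atTop (nhds 1) := by
    simpa [Function.comp_def] using (Real.continuous_exp.continuousAt (x := (0:ℝ))).tendsto.comp hlim1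
  have hexp2 : Tendsto (fun γ : ℝ => Real.exp ((-Δs / (2 * ρs * σsd)) / γ)) atTop (nhds 1) := by
    simpa [Function.comp_def] using (Real.continuous_exp.continuousAt (x := (0:ℝ))).tendsto.comp hlim2
  have hgt : Tendsto g atTop (nhds (1 -
      (2 * ρd * σds * 1 / (2 * ρd * σds + Δd * σus)) *
      (2 * ρs * σsd * 1 / (2 * ρs * σsd + Δs * σud)))) := by
    apply Tendsto.const_sub
    exact (((hexp1.const_mul _).div_const _).mul ((hexp2.const_mul _).div_const _))
  convert hgt using 2
  field_simp
  ring
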